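/- Let f : ℝ^m → ℝ be differentiable with β-Lipschitz gradient (β > 0) and uniformly bounded gradient ‖∇f(x)‖ ≤ G for all x. Then for all points w, w̄ ∈ ℝ^m, a gradient step of size 1/β taken at the stale point w̄ satisfies f(w − (1/β)∇f(w̄)) ≤ f(w) − (1/(2β))‖∇f(w̄)‖² + G‖w − w̄‖. -/

import Mathlib

open intervalIntegral

lemma line_hasDerivAt {m : ℕ} (f : EuclideanSpace ℝ (Fin m) → ℝ)
    (hdiff : Differentiable ℝ f) (x v : EuclideanSpace ℝ (Fin m)) (t : ℝ) :
    HasDerivAt (fun t : ℝ => f (x + t • v))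
      (inner ℝ (gradient f (x + t • v)) v : ℝ) t := by
  have h1 : HasDerivAt (fun t : ℝ => x + t • v) v t := by
    simpa using ((hasDerivAt_id t).smul_const v).const_add x
  have h2 := (hdiff (x + t • v)).hasGradientAt.hasFDerivAt
  have h3 := h2.comp_hasDerivAt t h1
  simp only [InnerProductSpace.toDual_apply_apply] at h3
  exact h3

lemma smooth_ineq {m : ℕ} (f : EuclideanSpace ℝ (Fin m) → ℝ)
    (hdiff : Differentiable ℝ f) (β : ℝ) (hβ : 0 ≤ β)
    (hsmooth : ∀ x y, ‖gradient f x - gradient f y‖ ≤ β * ‖x - y‖)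
    (x y : EuclideanSpace ℝ (Fin m)) :
    f y ≤ f x + inner ℝ (gradient f x) (y - x) + β / 2 * ‖y - x‖ ^ 2 := by
  set v := y - x with hv
  have hgradcont : Continuous fun p : EuclideanSpace ℝ (Fin m) => gradient f p := by
    refine LipschitzWith.continuous (K := Real.toNNReal β) ?_
    intro a b
    rw [edist_dist, edist_dist, dist_eq_norm, dist_eq_norm,
      ← ENNReal.ofReal_coe_nnreal, ← ENNReal.ofReal_mul (by positivity)]
    exact ENNReal.ofReal_le_ofReal <| by simpa [hβ] using hsmooth a b
  have hcont : Continuous fun t : ℝ => (inner ℝ (gradient f (x + t • v)) v : ℝ) :=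
    (hgradcont.comp (by continuity)).inner continuous_const
  have key : f y - f x = ∫ t in (0:ℝ)..1, (inner ℝ (gradient f (x + t • v)) v : ℝ) := by
    have := integral_eq_sub_of_hasDerivAt
      (f := fun t : ℝ => f (x + t • v))
      (f' := fun t : ℝ => (inner ℝ (gradient f (x + t • v)) v : ℝ))
      (a := 0) (b := 1)
      (fun t _ => line_hasDerivAt f hdiff x v t)
      (hcont.intervalIntegrable 0 1)
    rw [this]
    simp [hv]
  have hbound : ∀ t ∈ Set.Icc (0:ℝ) 1,
      (inner ℝ (gradient f (x + t • v)) v : ℝ) ≤ inner ℝ (gradient f x) v + β * t * ‖v‖ ^ 2 := by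
    intro t ht
    have h1 : (inner ℝ (gradient f (x + t • v)) v : ℝ) - inner ℝ (gradient f x) v
        = inner ℝ (gradient f (x + t • v) - gradient f x) v := by
      rw [inner_sub_left]
    have h2 : (inner ℝ (gradient f (x + t • v) - gradient f x) v : ℝ)
        ≤ ‖gradient f (x + t • v) - gradient f x‖ * ‖v‖ := real_inner_le_norm _ _
    have h3 : ‖gradient f (x + t • v) - gradient f x‖ ≤ β * (t * ‖v‖) := by
      have := hsmooth (x + t • v) x
      simpa [norm_smul, abs_of_nonneg ht.1, mul_assoc] using this
    nlinarith [norm_nonneg v, ht.1]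
  have hmono := intervalIntegral.integral_mono_on (μ := MeasureTheory.volume)
    (a := 0) (b := 1) zero_le_one (hcont.intervalIntegrable 0 1)
    (((continuous_const.add ((continuous_const.mul continuous_id).mul continuous_const)).intervalIntegrable 0 1 : IntervalIntegrable (fun t : ℝ => inner ℝ (gradient f x) v + β * t * ‖v‖ ^ 2) MeasureTheory.volume 0 1))
    hbound
  have hval : (∫ t in (0:ℝ)..1, (inner ℝ (gradient f x) v + β * t * ‖v‖ ^ 2 : ℝ))
      = inner ℝ (gradient f x) v + β / 2 * ‖v‖ ^ 2 := by
    have h1 : IntervalIntegrable (fun _ : ℝ => (inner ℝ (gradient f x) v : ℝ))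
        MeasureTheory.volume 0 1 := intervalIntegrable_const
    have h2 : IntervalIntegrable (fun t : ℝ => β * t * ‖v‖ ^ 2)
        MeasureTheory.volume 0 1 :=
      (Continuous.intervalIntegrable (by continuity) 0 1)
    have hfun : (fun t : ℝ => β * t * ‖v‖ ^ 2) = fun t : ℝ => (β * ‖v‖ ^ 2) * t := by
      funext t; ring
    rw [intervalIntegral.integral_add h1 h2, hfun,
      intervalIntegral.integral_const_mul, integral_id, intervalIntegral.integral_const]
    norm_num
    ring
  linarith [key ▸ hmono, hval ▸ hmono]


/-- If `f` is differentiable with `β`-Lipschitz gradient (`β > 0`) and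
uniformly bounded gradient `‖∇f x‖ ≤ G`, then for all `w, w̄`, a gradient step of size
`1/β` taken at the stale point `w̄` satisfies
`f (w - (1/β) • ∇f w̄) ≤ f w - (1/(2β)) ‖∇f w̄‖² + G ‖w - w̄‖`. -/
theorem stale_gradient_descent_lemma
    {m : ℕ} (f : EuclideanSpace ℝ (Fin m) → ℝ) (hdiff : Differentiable ℝ f)
    (β : ℝ) (hβ : 0 < β)
    (hsmooth : ∀ x y, ‖gradient f x - gradient f y‖ ≤ β * ‖x - y‖)
    (G : ℝ) (hG : ∀ x, ‖gradient f x‖ ≤ G)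
    (w wbar : EuclideanSpace ℝ (Fin m)) :
    f (w - (1 / β) • gradient f wbar) ≤
      f w - (1 / (2 * β)) * ‖gradient f wbar‖ ^ 2 + G * ‖w - wbar‖ := by
  set g := gradient f wbar with hg
  have h := smooth_ineq f hdiff β hβ.le hsmooth w (w - (1 / β) • g)
  have hyx : w - (1 / β) • g - w = -((1 / β) • g) := by abel
  rw [hyx] at h
  have hinner : (inner ℝ (gradient f w) (-((1 / β) • g)) : ℝ)
      = -(1 / β) * inner ℝ (gradient f w) g := by
    rw [inner_neg_right, real_inner_smul_right]; ring
  have hnorm : ‖-((1 / β) • g)‖ ^ 2 = (1 / β) ^ 2 * ‖g‖ ^ 2 := by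
    rw [norm_neg, norm_smul]
    rw [Real.norm_eq_abs, abs_of_pos (by positivity)]
    ring
  rw [hinner, hnorm] at h
  have h1 : (inner ℝ (gradient f w) g : ℝ) = ‖g‖ ^ 2 + inner ℝ (gradient f w - g) g := by
    rw [inner_sub_left, real_inner_self_eq_norm_sq]; ring
  have habs := abs_real_inner_le_norm (gradient f w - g) g
  have h3 : ‖gradient f w - g‖ ≤ β * ‖w - wbar‖ := hsmooth w wbar
  have h4 : ‖g‖ ≤ G := hG wbar
  have h2 : (inner ℝ (gradient f w - g) g : ℝ) ≥ -(β * ‖w - wbar‖ * G) := by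
    have hb := (abs_le.mp habs).1
    nlinarith [norm_nonneg (w - wbar), norm_nonneg g, norm_nonneg (gradient f w - g), hβ]
  have hβ2 : (0:ℝ) < 2 * β := by linarith
  rw [h1] at h
  have e1 : β / 2 * ((1 / β) ^ 2 * ‖g‖ ^ 2) = 1 / (2 * β) * ‖g‖ ^ 2 := by
    field_simp
  have e2 : -(1 / β) * inner ℝ (gradient f w - g) g ≤ ‖w - wbar‖ * G := by
    have hmul := mul_le_mul_of_nonneg_left (neg_le.mpr h2 :
      -(inner ℝ (gradient f w - g) g : ℝ) ≤ β * ‖w - wbar‖ * G)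
      (le_of_lt (by positivity : (0:ℝ) < 1 / β))
    calc -(1 / β) * inner ℝ (gradient f w - g) g
        = 1 / β * -(inner ℝ (gradient f w - g) g : ℝ) := by ring
      _ ≤ 1 / β * (β * ‖w - wbar‖ * G) := hmul
      _ = (1 / β * β) * (‖w - wbar‖ * G) := by ring
      _ = ‖w - wbar‖ * G := by rw [one_div_mul_cancel hβ.ne', one_mul]
  have e3 : -(1 / β) * ‖g‖ ^ 2 + 1 / (2 * β) * ‖g‖ ^ 2 = -(1 / (2 * β)) * ‖g‖ ^ 2 := by
    field_simp; ring
  nlinarith [h, e1, e2, e3]
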